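/- Let a_1,...,a_n ∈ F_q^*, let C, C' be linear codes in F_q^n with C^⊥ = e·C' where e = (a_1^2,...,a_n^2). If C ∩ C' is one-dimensional, then the code a·C (with a = (a_1,...,a_n)) has one-dimensional Euclidean hull, i.e., dim((a·C) ∩ (a·C)^⊥) = 1. -/
import Mathlib


open Finset

def scaleMap {F : Type} [Field F] {n : ℕ} (a : Fin n → F) :
    (Fin n → F) →ₗ[F] (Fin n → F) :=
  LinearMap.pi fun i => a i • LinearMap.proj i

lemma scaleMap_apply {F : Type} [Field F] {n : ℕ} (a x : Fin n → F) (i : Fin n) :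
    scaleMap a x i = a i * x i := rfl

lemma scaleMap_injective {F : Type} [Field F] {n : ℕ} {a : Fin n → F} (ha : ∀ i, a i ≠ 0) :
    Function.Injective (scaleMap a) := by
  intro x y hxy
  funext i
  have := congrFun hxy i
  simp only [scaleMap_apply] at this
  exact mul_left_cancel₀ (ha i) this

def dualCode {F : Type} [Field F] {n : ℕ} (C : Submodule F (Fin n → F)) :
    Submodule F (Fin n → F) where
  carrier := {y | ∀ c ∈ C, ∑ i, y i * c i = 0}
  add_mem' := by
    intro x y hx hy c hc
    simp only [Pi.add_apply, add_mul, Finset.sum_add_distrib, hx c hc, hy c hc, add_zero]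
  zero_mem' := by intro c hc; simp
  smul_mem' := by
    intro r x hx c hc
    simp only [Pi.smul_apply, smul_eq_mul, mul_assoc, ← Finset.mul_sum, hx c hc, mul_zero]

noncomputable def minDist {F : Type} [Field F] [DecidableEq F] {n : ℕ}
    (C : Submodule F (Fin n → F)) : ℕ :=
  sInf {w | ∃ c ∈ C, c ≠ 0 ∧ hammingNorm c = w}

theorem stmt3 {F : Type} [Field F] [Fintype F] {n : ℕ} (a : Fin n → F)
    (ha : ∀ i, a i ≠ 0) (C C' : Submodule F (Fin n → F))
    (h : dualCode C = C'.map (scaleMap (fun i => (a i) ^ 2)))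
    (hint : Module.finrank F ↥(C ⊓ C') = 1) :
    Module.finrank F ↥(C.map (scaleMap a) ⊓ dualCode (C.map (scaleMap a))) = 1 := by
  have hinj := scaleMap_injective ha
  have hdual : dualCode (C.map (scaleMap a)) = C'.map (scaleMap a) := by
    ext y
    constructor
    · intro hy
      have hay : scaleMap a y ∈ dualCode C := by
        intro c hc
        have h1 := hy (scaleMap a c) (Submodule.mem_map_of_mem hc)
        rw [← h1]
        apply Finset.sum_congr rfl
        intro i _
        simp only [scaleMap_apply]; ring
      rw [h] at hay
      obtain ⟨c', hc', hcc⟩ := hay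
      refine ⟨c', hc', ?_⟩
      funext i
      have h2 := congrFun hcc i
      simp only [scaleMap_apply] at h2 ⊢
      have h3 : a i * (a i * c' i) = a i * y i := by rw [← h2]; ring
      exact mul_left_cancel₀ (ha i) h3
    · rintro ⟨c', hc', rfl⟩ b hb
      obtain ⟨c, hc, rfl⟩ := hb
      have hm : scaleMap (fun i => (a i) ^ 2) c' ∈ dualCode C := by
        rw [h]; exact Submodule.mem_map_of_mem hc'
      have h0 := hm c hc
      rw [← h0]
      apply Finset.sum_congr rfl
      intro i _
      simp only [scaleMap_apply]; ring
  rw [hdual, ← Submodule.map_inf _ hinj, ← hint]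
  exact (Submodule.equivMapOfInjective _ hinj (C ⊓ C')).finrank_eq.symm
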